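/- Let G be a finite simple cubic graph and let X be a near independent dominating set of G, i.e., a dominating set X such that the subgraph G[X] induced by X has maximum degree at most 1. Then 2·i(G) ≤ 2·|X| + n₁(G[X]), where n₁(G[X]) is the number of vertices of degree 1 in the induced subgraph G[X]. -/

import Mathlib

open Set

/-- The degree of a vertex `v` in a simple graph `G`. -/
noncomputable def deg {V : Type*} (G : SimpleGraph V) (v : V) : ℕ :=
  (G.neighborSet v).ncard

/-- `S` is a dominating set of `G`: every vertex not in `S` has a neighbor in `S`. -/
def IsDomSet {V : Type*} (G : SimpleGraph V) (S : Set V) : Prop :=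
  ∀ v ∉ S, ∃ u ∈ S, G.Adj u v

/-- `S` is an independent dominating set of `G`. -/
def IsIndepDomSet {V : Type*} (G : SimpleGraph V) (S : Set V) : Prop :=
  IsDomSet G S ∧ ∀ u ∈ S, ∀ v ∈ S, ¬ G.Adj u v

/-- The independent domination number `i(G)`. -/
noncomputable def indepDomNum {V : Type*} (G : SimpleGraph V) : ℕ :=
  sInf {n | ∃ S : Set V, IsIndepDomSet G S ∧ S.ncard = n}

/-- The domination number `γ(G)`. -/
noncomputable def domNum {V : Type*} (G : SimpleGraph V) : ℕ :=
  sInf {n | ∃ S : Set V, IsDomSet G S ∧ S.ncard = n}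

/-- `G` contains no cycle on 4 vertices as a subgraph. -/
def NoFourCycle {V : Type*} (G : SimpleGraph V) : Prop :=
  ¬ ∃ a b c d : V, a ≠ b ∧ a ≠ c ∧ a ≠ d ∧ b ≠ c ∧ b ≠ d ∧ c ≠ d ∧
      G.Adj a b ∧ G.Adj b c ∧ G.Adj c d ∧ G.Adj d a

/-- `nk G k` is the number of vertices of degree `k` in `G`. -/
noncomputable def nk {V : Type*} (G : SimpleGraph V) (k : ℕ) : ℕ :=
  {v | deg G v = k}.ncard

lemma my_biUnion_card {α β : Type*} {s : Set α} (hs : s.Finite) (F : α → Set β)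
    (k : ℕ) (h : ∀ a ∈ s, (F a).ncard ≤ k) :
    (⋃ a ∈ s, F a).ncard ≤ k * s.ncard := by
  refine Set.Finite.induction_on
    (motive := fun t _ => (∀ a ∈ t, (F a).ncard ≤ k) → (⋃ a ∈ t, F a).ncard ≤ k * t.ncard)
    s hs (by simp) ?_ h
  intro a t hat ht ih h
  rw [Set.biUnion_insert]
  calc (F a ∪ ⋃ x ∈ t, F x).ncard ≤ (F a).ncard + (⋃ x ∈ t, F x).ncard :=
        Set.ncard_union_le _ _
    _ ≤ k + k * t.ncard :=
        Nat.add_le_add (h a (mem_insert _ _)) (ih (fun x hx => h x (mem_insert_of_mem _ hx)))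
    _ = k * (insert a t).ncard := by
        rw [Set.ncard_insert_of_notMem hat ht]; ring

/-- For a near independent dominating set `X` of a cubic graph `G`,
`2·i(G) ≤ 2·|X| + n₁(G[X])`. -/
theorem near_indep_dom_set_bound {V : Type*} [Fintype V] (G : SimpleGraph V)
    (hcubic : ∀ v, deg G v = 3) (X : Set V) (hdom : IsDomSet G X)
    (hnear : ∀ v : X, deg (G.induce X) v ≤ 1) :
    2 * indepDomNum G ≤ 2 * X.ncard + nk (G.induce X) 1 := by
  classical
  set NX : V → Set V := fun v => {u | u ∈ X ∧ G.Adj v u} with hNXdef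
  have hdegX : ∀ (v : V) (hv : v ∈ X), deg (G.induce X) ⟨v, hv⟩ = (NX v).ncard := by
    intro v hv
    have himg : NX v = Subtype.val '' ((G.induce X).neighborSet ⟨v, hv⟩) := by
      ext u
      simp only [hNXdef, Set.mem_setOf_eq, Set.mem_image, SimpleGraph.mem_neighborSet,
        SimpleGraph.comap_adj, SimpleGraph.induce_eq_coe_induce_top]
      constructor
      · rintro ⟨hu, hadj⟩
        exact ⟨⟨u, hu⟩, ⟨hv, hu, hadj⟩, rfl⟩
      · rintro ⟨⟨w, hw⟩, hadj, rfl⟩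
        exact ⟨hw, hadj.2.2⟩
    rw [deg, himg, Set.ncard_image_of_injective _ Subtype.val_injective]
  have hle1 : ∀ v ∈ X, (NX v).ncard ≤ 1 := fun v hv => (hdegX v hv) ▸ hnear ⟨v, hv⟩
  have hD1 : ∀ v ∈ X, (NX v).Nonempty → (NX v).ncard = 1 := by
    intro v hv hne
    have h1 := (Set.ncard_pos (NX v).toFinite).mpr hne
    have h2 := hle1 v hv
    omega
  set D : Set V := {v | v ∈ X ∧ (NX v).ncard = 1} with hDdef
  have hDX : D ⊆ X := fun v hv => hv.1
  have hnk : nk (G.induce X) 1 = D.ncard := by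
    have himg : D = Subtype.val '' {w : ↥X | deg (G.induce X) w = 1} := by
      ext v
      simp only [hDdef, Set.mem_setOf_eq, Set.mem_image]
      constructor
      · rintro ⟨hv, h1⟩
        exact ⟨⟨v, hv⟩, by rw [hdegX v hv]; exact h1, rfl⟩
      · rintro ⟨⟨w, hw⟩, h1, rfl⟩
        exact ⟨hw, by rw [← hdegX w hw]; exact h1⟩
    rw [nk, himg, Set.ncard_image_of_injective _ Subtype.val_injective]
  have hex : ∀ v ∈ D, ∃ u, NX v = {u} := fun v hv => Set.ncard_eq_one.mp hv.2
  set p : V → V := fun v => if h : v ∈ D then (hex v h).choose else v with hpdef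
  have hp : ∀ v ∈ D, NX v = {p v} := by
    intro v hv
    simp only [hpdef, dif_pos hv]
    exact (hex v hv).choose_spec
  have hpmem : ∀ v ∈ D, p v ∈ X ∧ G.Adj v (p v) := by
    intro v hv
    have : p v ∈ NX v := by rw [hp v hv]; rfl
    exact this
  have huniq : ∀ v ∈ D, ∀ u, u ∈ X → G.Adj v u → u = p v := by
    intro v hv u hu hadj
    have : u ∈ NX v := ⟨hu, hadj⟩
    rwa [hp v hv, Set.mem_singleton_iff] at this
  have hpD : ∀ v ∈ D, p v ∈ D := by
    intro v hv
    exact ⟨(hpmem v hv).1, hD1 _ (hpmem v hv).1 ⟨v, hDX hv, ((hpmem v hv).2).symm⟩⟩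
  have hpp : ∀ v ∈ D, p (p v) = v := by
    intro v hv
    exact (huniq (p v) (hpD v hv) v hv.1 ((hpmem v hv).2).symm).symm
  have hpne : ∀ v ∈ D, p v ≠ v := by
    intro v hv h
    exact G.irrefl (h ▸ (hpmem v hv).2)
  obtain ⟨f, hf⟩ : ∃ f : V → ℕ, Function.Injective f := by
    have : Countable V := Finite.to_countable
    exact Countable.exists_injective_nat V
  set R : Set V := {v | v ∈ D ∧ f (p v) < f v} with hRdef
  have hRD : R ⊆ D := fun v hv => hv.1
  have hDcard : D.ncard = 2 * R.ncard := by
    have hsplit : D = R ∪ p '' R := by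
      apply Set.Subset.antisymm
      · intro v hv
        rcases lt_or_gt_of_ne (hf.ne (hpne v hv)) with h | h
        · exact Or.inl ⟨hv, h⟩
        · refine Or.inr ⟨p v, ⟨hpD v hv, ?_⟩, hpp v hv⟩
          rw [hpp v hv]; exact h
      · rintro v (hv | ⟨w, hw, rfl⟩)
        · exact hRD hv
        · exact hpD w (hRD hw)
    have hdisj : Disjoint R (p '' R) := by
      rw [Set.disjoint_left]
      rintro v hv ⟨w, hw, rfl⟩
      have h1 := hv.2
      rw [hpp w (hRD hw)] at h1
      exact absurd hw.2 (not_lt.mpr h1.le)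
    have hinj : Set.InjOn p R := by
      intro a ha b hb h
      have := congrArg p h
      rwa [hpp a (hRD ha), hpp b (hRD hb)] at this
    rw [hsplit, Set.ncard_union_eq hdisj, Set.ncard_image_of_injOn hinj]
    ring
  set A : Set V := X \ R with hAdef
  have hAX : A ⊆ X := Set.diff_subset
  have hAcard : A.ncard + R.ncard = X.ncard :=
    Set.ncard_diff_add_ncard_of_subset (hRD.trans hDX)
  have hedge : ∀ u ∈ X, ∀ v ∈ X, G.Adj u v → (u ∈ D ∧ p u = v) := by
    intro u hu v hv hadj
    have huD : u ∈ D := ⟨hu, hD1 u hu ⟨v, hv, hadj⟩⟩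
    exact ⟨huD, (huniq u huD v hv hadj).symm⟩
  have hAindep : ∀ u ∈ A, ∀ v ∈ A, ¬ G.Adj u v := by
    intro u hu v hv hadj
    obtain ⟨huD, hpu⟩ := hedge u (hAX hu) v (hAX hv) hadj
    obtain ⟨hvD, hpv⟩ := hedge v (hAX hv) u (hAX hu) hadj.symm
    rcases lt_or_gt_of_ne (hf.ne (hpne u huD)) with h | h
    · exact hu.2 ⟨huD, h⟩
    · apply hv.2
      refine ⟨hvD, ?_⟩
      rw [hpv]
      rw [hpu] at h
      exact h
  set P : Set V := {w | w ∉ A ∧ ∀ u ∈ A, ¬ G.Adj u w} with hPdef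
  have hPX : ∀ w ∈ P, w ∉ X := by
    intro w hw hwX
    have hwR : w ∈ R := by
      by_contra h
      exact hw.1 ⟨hwX, h⟩
    have hwD := hRD hwR
    have hpwA : p w ∈ A := by
      refine ⟨(hpmem w hwD).1, ?_⟩
      intro hpwR
      have h1 := hpwR.2
      rw [hpp w hwD] at h1
      exact absurd hwR.2 (not_lt.mpr h1.le)
    exact hw.2 (p w) hpwA ((hpmem w hwD).2).symm
  have hPsub : P ⊆ ⋃ v ∈ R, (G.neighborSet v \ X) := by
    intro w hw
    obtain ⟨x, hxX, hadj⟩ := hdom w (hPX w hw)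
    have hxR : x ∈ R := by
      by_contra h
      exact hw.2 x ⟨hxX, h⟩ hadj
    exact Set.mem_biUnion hxR ⟨hadj, hPX w hw⟩
  have hNc : ∀ v ∈ R, (G.neighborSet v \ X).ncard ≤ 2 := by
    intro v hvR
    have hvD := hRD hvR
    have hsub : G.neighborSet v \ X ⊆ G.neighborSet v \ {p v} := by
      intro u hu
      refine ⟨hu.1, fun h => hu.2 ?_⟩
      rw [Set.mem_singleton_iff] at h
      rw [h]
      exact (hpmem v hvD).1
    have h3 : (G.neighborSet v).ncard = 3 := hcubic v
    have hmem : p v ∈ G.neighborSet v := (hpmem v hvD).2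
    calc (G.neighborSet v \ X).ncard
        ≤ (G.neighborSet v \ {p v}).ncard := Set.ncard_le_ncard hsub (Set.toFinite _)
      _ = (G.neighborSet v).ncard - 1 := Set.ncard_diff_singleton_of_mem hmem
      _ ≤ 2 := by omega
  have hPcard : P.ncard ≤ 2 * R.ncard :=
    le_trans (Set.ncard_le_ncard hPsub (Set.toFinite _)) (my_biUnion_card (Set.toFinite R) _ 2 hNc)
  -- choose a maximum-cardinality independent subset of P
  set PF : Finset V := (Set.toFinite P).toFinset with hPFdef
  set cand : Finset (Finset V) :=
    PF.powerset.filter (fun s => ∀ a ∈ s, ∀ b ∈ s, ¬ G.Adj a b) with hcanddef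
  have hcne : cand.Nonempty := ⟨∅, by simp [hcanddef]⟩
  obtain ⟨S, hS, hSmax⟩ := Finset.exists_max_image cand Finset.card hcne
  rw [hcanddef, Finset.mem_filter, Finset.mem_powerset] at hS
  obtain ⟨hSPF, hSind⟩ := hS
  have hSP : (↑S : Set V) ⊆ P := by
    intro x hx
    have := hSPF (Finset.mem_coe.mp hx)
    rwa [hPFdef, Set.Finite.mem_toFinset] at this
  set I : Set V := A ∪ ↑S with hIdef
  have hIid : IsIndepDomSet G I := by
    constructor
    · intro v hv
      rw [hIdef, Set.mem_union] at hv
      push_neg at hv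
      by_contra hno
      push_neg at hno
      have hnoA : ∀ u ∈ A, ¬ G.Adj u v := fun u hu => hno u (Set.mem_union_left _ hu)
      have hnoS : ∀ u ∈ S, ¬ G.Adj u v := fun u hu =>
        hno u (Set.mem_union_right _ (Finset.mem_coe.mpr hu))
      have hvP : v ∈ P := ⟨hv.1, hnoA⟩
      have hvS : v ∉ S := fun h => hv.2 (Finset.mem_coe.mpr h)
      have hins : insert v S ∈ cand := by
        rw [hcanddef, Finset.mem_filter, Finset.mem_powerset]
        constructor
        · intro x hx
          rcases Finset.mem_insert.mp hx with rfl | hx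
          · rw [hPFdef, Set.Finite.mem_toFinset]; exact hvP
          · exact hSPF hx
        · intro a ha b hb hadj2
          rcases Finset.mem_insert.mp ha with ha' | ha'
          · subst ha'
            rcases Finset.mem_insert.mp hb with hb' | hb'
            · subst hb'; exact G.irrefl hadj2
            · exact hnoS b hb' hadj2.symm
          · rcases Finset.mem_insert.mp hb with hb' | hb'
            · subst hb'; exact hnoS a ha' hadj2
            · exact hSind a ha' b hb' hadj2
      have hle := hSmax _ hins
      rw [Finset.card_insert_of_notMem hvS] at hle
      omega
    · intro u hu v hv hadj
      rw [hIdef, Set.mem_union] at hu hv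
      rcases hu with hu | hu <;> rcases hv with hv | hv
      · exact hAindep u hu v hv hadj
      · exact (hSP hv).2 u hu hadj
      · exact (hSP hu).2 v hv hadj.symm
      · exact hSind u (Finset.mem_coe.mp hu) v (Finset.mem_coe.mp hv) hadj
  have hIle : indepDomNum G ≤ I.ncard := Nat.sInf_le ⟨I, hIid, rfl⟩
  have hScard : (↑S : Set V).ncard ≤ P.ncard := Set.ncard_le_ncard hSP (Set.toFinite _)
  have hIcard : I.ncard ≤ A.ncard + 2 * R.ncard := by
    calc I.ncard ≤ A.ncard + (↑S : Set V).ncard := Set.ncard_union_le _ _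
      _ ≤ A.ncard + P.ncard := Nat.add_le_add_left hScard _
      _ ≤ A.ncard + 2 * R.ncard := Nat.add_le_add_left hPcard _
  rw [hnk, hDcard]
  omega
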